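/- Let G be a finite simple graph of VC-dimension at most 1, and let u and v be distinct vertices with N[u] ⊆ N[v]. Let k ≥ 1 and let I and J be independent sets of G of size k with v ∉ I and v ∉ J. Then I can be TJ-transformed into J in G if and only if I can be TJ-transformed into J in the induced subgraph of G obtained by deleting v (equivalently, via a sequence of independent sets of size k none of which contains v). -/

import Mathlib

/-- The closed neighborhood of a vertex: the vertex together with its neighbors. -/
def closedNbhd {V : Type*} (G : SimpleGraph V) (v : V) : Set V :=
  insert v (G.neighborSet v)

/-- `G` has VC-dimension at most 1 (w.r.t. closed neighborhoods): no pair of distinct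
vertices is shattered by closed neighborhoods. -/
def VCdimLEOne {V : Type*} (G : SimpleGraph V) : Prop :=
  ∀ u v : V, u ≠ v →
    ¬ ∀ T ⊆ ({u, v} : Set V), ∃ w : V, closedNbhd G w ∩ {u, v} = T

/-- `I` is an independent set of `G`: its vertices are pairwise non-adjacent. -/
def IsIndep {V : Type*} (G : SimpleGraph V) (I : Finset V) : Prop :=
  ∀ a ∈ I, ∀ b ∈ I, a ≠ b → ¬ G.Adj a b

/-- Two independent sets of size `k` are TJ-adjacent if the second is obtained from the
first by replacing one vertex `u ∈ I` by a vertex `v ∉ I`. -/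
def TJStep {V : Type*} [DecidableEq V] (G : SimpleGraph V) (k : ℕ) (I J : Finset V) : Prop :=
  IsIndep G I ∧ IsIndep G J ∧ I.card = k ∧ J.card = k ∧
    ∃ u ∈ I, ∃ v, v ∉ I ∧ J = insert v (I.erase u)

/-- `I` can be TJ-transformed into `J`: there is a finite sequence of independent sets of
size `k`, starting at `I` and ending at `J`, in which consecutive sets are TJ-adjacent. -/
def TJReach {V : Type*} [DecidableEq V] (G : SimpleGraph V) (k : ℕ) (I J : Finset V) : Prop :=
  Relation.ReflTransGen (TJStep G k) I J

private lemma indep_swap {V : Type*} [DecidableEq V] {G : SimpleGraph V} {u v : V}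
    (hadj : G.Adj v u) (hdom : ∀ a, a ≠ v → G.Adj u a → G.Adj v a)
    {A : Finset V} (hA : IsIndep G A) (hv : v ∈ A) :
    IsIndep G (insert u (A.erase v)) := by
  intro a ha b hb hab hGab
  simp only [Finset.mem_insert, Finset.mem_erase] at ha hb
  rcases ha with rfl | ⟨hav, haA⟩
  · rcases hb with rfl | ⟨hbv, hbA⟩
    · exact hab rfl
    · exact hA v hv b hbA hbv.symm (hdom b hbv hGab)
  · rcases hb with rfl | ⟨hbv, hbA⟩
    · exact hA v hv a haA hav.symm (hdom a hav hGab.symm)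
    · exact hA a haA b hbA hab hGab

private lemma card_swap {V : Type*} [DecidableEq V] {u v : V} {A : Finset V}
    (hu : u ∉ A) (hv : v ∈ A) : (insert u (A.erase v)).card = A.card := by
  rw [Finset.card_insert_of_notMem (fun h => hu (Finset.mem_of_mem_erase h))]
  exact Finset.card_erase_add_one hv

theorem tj_reach_delete_dominated_vertex {V : Type*} [Fintype V] [DecidableEq V]
    (G : SimpleGraph V) (hVC : VCdimLEOne G) (u v : V) (huv : u ≠ v)
    (hsub : closedNbhd G u ⊆ closedNbhd G v)
    (k : ℕ) (hk : 1 ≤ k) (I J : Finset V)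
    (hI : IsIndep G I) (hJ : IsIndep G J) (hIcard : I.card = k) (hJcard : J.card = k)
    (hIv : v ∉ I) (hJv : v ∉ J) :
    TJReach G k I J ↔
      Relation.ReflTransGen (fun A B => TJStep G k A B ∧ v ∉ A ∧ v ∉ B) I J := by
  set R' : Finset V → Finset V → Prop := fun A B => TJStep G k A B ∧ v ∉ A ∧ v ∉ B with hR'
  constructor
  · intro h
    -- u is adjacent to v
    have hadj : G.Adj v u := by
      have hu : u ∈ closedNbhd G v := hsub (by simp [closedNbhd])
      simp only [closedNbhd, Set.mem_insert_iff, SimpleGraph.mem_neighborSet] at hu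
      exact hu.resolve_left huv
    have hdom : ∀ a, a ≠ v → G.Adj u a → G.Adj v a := by
      intro a hav hGua
      have : a ∈ closedNbhd G v := hsub (by simp [closedNbhd, hGua])
      simp only [closedNbhd, Set.mem_insert_iff, SimpleGraph.mem_neighborSet] at this
      exact this.resolve_left hav
    -- v-containing independent sets don't contain u
    have hnu : ∀ A : Finset V, IsIndep G A → v ∈ A → u ∉ A := by
      intro A hA hv hu
      exact hA v hv u hu hadj.ne hadj
    -- the projection map
    set φ : Finset V → Finset V := fun A => if v ∈ A then insert u (A.erase v) else A with hφ
    have key : ∀ A B, TJStep G k A B → Relation.ReflTransGen R' (φ A) (φ B) := by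
      intro A B hstep
      obtain ⟨hiA, hiB, hcA, hcB, x, hxA, w, hwA, hBdef⟩ := hstep
      have huA : v ∈ A → u ∉ A := hnu A hiA
      have huB : v ∈ B → u ∉ B := hnu B hiB
      by_cases hvA : v ∈ A <;> by_cases hvB : v ∈ B
      · -- v ∈ A, v ∈ B : swapped step
        have hxv : x ≠ v := by
          rintro rfl
          rw [hBdef] at hvB
          rcases Finset.mem_insert.mp hvB with h | h
          · exact hwA (h ▸ hvA)
          · exact (Finset.mem_erase.mp h).1 rfl
        have hwv : w ≠ v := fun h => hwA (h ▸ hvA)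
        have hwu : w ≠ u := by
          rintro rfl
          exact huB hvB (hBdef ▸ Finset.mem_insert_self w _)
        have hxu : x ≠ u := fun h => huA hvA (h ▸ hxA)
        have hBe : insert u (B.erase v) = insert w ((insert u (A.erase v)).erase x) := by
          subst hBdef
          ext a
          simp only [Finset.mem_insert, Finset.mem_erase]
          constructor
          · rintro (rfl | ⟨hav, rfl | ⟨hax, haA⟩⟩)
            · exact Or.inr ⟨fun h => hxu h.symm, Or.inl rfl⟩
            · exact Or.inl rfl
            · exact Or.inr ⟨hax, Or.inr ⟨hav, haA⟩⟩
          · rintro (rfl | ⟨hax, rfl | ⟨hav, haA⟩⟩)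
            · exact Or.inr ⟨hwv, Or.inl rfl⟩
            · exact Or.inl rfl
            · exact Or.inr ⟨hav, Or.inr ⟨hax, haA⟩⟩
        have hiA' := indep_swap hadj hdom hiA hvA
        have hiB' := indep_swap hadj hdom hiB hvB
        have hcA' : (insert u (A.erase v)).card = k := by
          rw [card_swap (huA hvA) hvA, hcA]
        have hcB' : (insert u (B.erase v)).card = k := by
          rw [card_swap (huB hvB) hvB, hcB]
        simp only [hφ, if_pos hvA, if_pos hvB]
        refine Relation.ReflTransGen.single ⟨⟨hiA', hiB', hcA', hcB', x, ?_, w, ?_, hBe⟩, ?_, ?_⟩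
        · exact Finset.mem_insert_of_mem (Finset.mem_erase.mpr ⟨hxv, hxA⟩)
        · simp only [Finset.mem_insert, Finset.mem_erase, not_or]
          exact ⟨hwu, fun h => hwA h.2⟩
        · simp only [Finset.mem_insert, Finset.mem_erase, not_or]
          exact ⟨hadj.ne, fun h => h.1 rfl⟩
        · simp only [Finset.mem_insert, Finset.mem_erase, not_or]
          exact ⟨hadj.ne, fun h => h.1 rfl⟩
      · -- v ∈ A, v ∉ B : x = v
        have hxv : x = v := by
          by_contra hxv
          apply hvB
          rw [hBdef]
          exact Finset.mem_insert_of_mem (Finset.mem_erase.mpr ⟨fun h => hxv h.symm, hvA⟩)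
        subst hxv
        simp only [hφ, if_pos hvA, if_neg hvB]
        by_cases hwu : w = u
        · subst hwu
          rw [hBdef]
        · have hiA' := indep_swap hadj hdom hiA hvA
          have hcA' : (insert u (A.erase x)).card = k := by
            rw [card_swap (huA hvA) hvA, hcA]
          have hBe : B = insert w ((insert u (A.erase x)).erase u) := by
            rw [Finset.erase_insert (fun h => huA hvA (Finset.mem_of_mem_erase h)), hBdef]
          refine Relation.ReflTransGen.single ⟨⟨hiA', hiB, hcA', hcB, u,
            Finset.mem_insert_self u _, w, ?_, hBe⟩, ?_, hvB⟩
          · simp only [Finset.mem_insert, Finset.mem_erase, not_or]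
            exact ⟨hwu, fun h => hwA h.2⟩
          · simp only [Finset.mem_insert, Finset.mem_erase, not_or]
            exact ⟨hadj.ne, fun h => h.1 rfl⟩
      · -- v ∉ A, v ∈ B : w = v
        have hwv : w = v := by
          by_contra hwv
          rw [hBdef] at hvB
          rcases Finset.mem_insert.mp hvB with h | h
          · exact hwv h.symm
          · exact hvA (Finset.mem_of_mem_erase h)
        subst hwv
        simp only [hφ, if_neg hvA, if_pos hvB]
        have hBe : B.erase w = A.erase x := by
          rw [hBdef, Finset.erase_insert (fun h => hvA (Finset.mem_of_mem_erase h))]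
        by_cases hux : u = x
        · subst hux
          rw [hBe, Finset.insert_erase hxA]
        · have huA2 : u ∉ A := by
            intro huA3
            apply huB hvB
            rw [hBdef]
            exact Finset.mem_insert_of_mem (Finset.mem_erase.mpr ⟨hux, huA3⟩)
          have hiB' := indep_swap hadj hdom hiB hvB
          have hcB' : (insert u (B.erase w)).card = k := by
            rw [card_swap (huB hvB) hvB, hcB]
          refine Relation.ReflTransGen.single ⟨⟨hiA, hiB', hcA, hcB', x, hxA, u, huA2,
            by rw [hBe]⟩, hvA, ?_⟩
          simp only [Finset.mem_insert, Finset.mem_erase, not_or]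
          exact ⟨hadj.ne, fun h => h.1 rfl⟩
      · -- v ∉ A, v ∉ B
        simp only [hφ, if_neg hvA, if_neg hvB]
        exact Relation.ReflTransGen.single
          ⟨⟨hiA, hiB, hcA, hcB, x, hxA, w, hwA, hBdef⟩, hvA, hvB⟩
    have main : Relation.ReflTransGen R' (φ I) (φ J) := by
      clear hJ hJcard hJv
      induction h with
      | refl => exact Relation.ReflTransGen.refl
      | tail _ hstep ih => exact ih.trans (key _ _ hstep)
    simpa only [hφ, if_neg hIv, if_neg hJv] using main
  · intro h
    exact Relation.ReflTransGen.mono (by intro A B hab; exact hab.1) I J h
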